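/- Suppose −(A−M) is Hurwitz, let u = (A−M)^{−1}𝟙 and let k be an index with u_k = max_i u_i. Let i ≠ j with M_{ij} = 0 and m > 0, suppose −(A − M − m e_i e_jᵀ) is Hurwitz, and suppose ((A−M)^{−1})_{ki} > 0 (which holds in particular when there is a directed path from node i to node k in the graph of M). Then ū = (A − M − m e_i e_jᵀ)^{−1}𝟙 satisfies ū_k > max_i u_i; in particular, max_i ū_i > max_i u_i, so the addition of the edge is not scalable. -/

import Mathlib

open Matrix

/-- A real square matrix is Hurwitz if every eigenvalue (over `ℂ`) has negative real part. -/
def IsHurwitz {n : Type*} [Fintype n] [DecidableEq n] (B : Matrix n n ℝ) : Prop :=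
  ∀ μ ∈ spectrum ℂ (B.map Complex.ofReal), μ.re < 0

section NeumannSection
variable {n : Type*} [Fintype n] [DecidableEq n]
attribute [local instance] Matrix.linftyOpNormedRing Matrix.linftyOpNormedAlgebra

private lemma pow_entry_nonneg (X : Matrix n n ℝ) (hX : ∀ p q, 0 ≤ X p q) :
    ∀ (r : ℕ) p q, 0 ≤ (X ^ r) p q := by
  intro r
  induction r with
  | zero => intro p q; simp [Matrix.one_apply]; positivity
  | succ r ih =>
    intro p q
    rw [pow_succ, Matrix.mul_apply]
    exact Finset.sum_nonneg fun l _ => mul_nonneg (ih p l) (hX l q)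

private lemma entry_le_norm (Y : Matrix n n ℝ) (p q : n) : ‖Y p q‖ ≤ ‖Y‖ := by
  rw [Matrix.linfty_opNorm_def]
  have h1 : ‖Y p q‖₊ ≤ ∑ j, ‖Y p j‖₊ :=
    Finset.single_le_sum (f := fun j => ‖Y p j‖₊) (fun j _ => zero_le) (Finset.mem_univ q)
  have h2 : (∑ j, ‖Y p j‖₊) ≤ (Finset.univ : Finset n).sup fun i => ∑ j, ‖Y i j‖₊ :=
    Finset.le_sup (f := fun i => ∑ j, ‖Y i j‖₊) (Finset.mem_univ p)
  exact_mod_cast h1.trans h2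

lemma neumann_nonneg (X : Matrix n n ℝ) (hX : ∀ p q, 0 ≤ X p q)
    (hrow : ∀ p, ∑ q, X p q < 1) :
    IsUnit (1 - X).det ∧ ∀ p q, 0 ≤ (1 - X)⁻¹ p q := by
  have hnorm : ‖X‖ < 1 := by
    rw [Matrix.linfty_opNorm_def]
    have h1 : ((Finset.univ : Finset n).sup fun i => ∑ j, ‖X i j‖₊) < 1 := by
      refine Finset.sup_lt_iff (by norm_num : (0:NNReal) < 1) |>.2 fun p _ => ?_
      have e : ∀ j, ‖X p j‖ = X p j := fun j => by
        rw [Real.norm_eq_abs, abs_of_nonneg (hX p j)]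
      have h2 : (∑ j, ‖X p j‖) < 1 := by simp only [e]; exact hrow p
      have h3 : ((∑ j, ‖X p j‖₊ : NNReal) : ℝ) < 1 := by push_cast; exact h2
      exact_mod_cast h3
    exact_mod_cast h1
  have hsum : Summable (fun r : ℕ => X ^ r) := summable_geometric_of_norm_lt_one hnorm
  have hmul : (∑' r : ℕ, X ^ r) * (1 - X) = 1 := geom_series_mul_neg X hnorm
  refine ⟨Matrix.isUnit_det_of_left_inverse hmul, ?_⟩
  rw [Matrix.inv_eq_left_inv hmul]
  intro p q
  set S := ∑' r : ℕ, X ^ r with hS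
  have htend := hsum.hasSum.tendsto_sum_nat
  have htend2 : Filter.Tendsto (fun N : ℕ => (∑ r ∈ Finset.range N, X ^ r) p q)
      Filter.atTop (nhds (S p q)) := by
    rw [tendsto_iff_dist_tendsto_zero]
    apply squeeze_zero (fun _ => dist_nonneg) (g := fun N => dist (∑ r ∈ Finset.range N, X ^ r) S)
    · intro N
      rw [dist_eq_norm, dist_eq_norm]
      have := entry_le_norm ((∑ r ∈ Finset.range N, X ^ r) - S) p q
      simpa using this
    · rwa [← tendsto_iff_dist_tendsto_zero]
  refine ge_of_tendsto htend2 (Filter.Eventually.of_forall fun N => ?_)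
  rw [Matrix.sum_apply]
  exact Finset.sum_nonneg fun r _ => pow_entry_nonneg X hX r p q

lemma step_left (D : Matrix n n ℝ) (hD : IsUnit D.det)
    (hDinv : ∀ p q, 0 ≤ D⁻¹ p q) {ε : ℝ} (hε : 0 ≤ ε)
    (hrow : ∀ p, ε * ∑ q, D⁻¹ p q < 1) :
    IsUnit (D - ε • 1).det ∧ ∀ p q, 0 ≤ (D - ε • 1)⁻¹ p q := by
  set X := ε • D⁻¹ with hX
  have hXn : ∀ p q, 0 ≤ X p q := fun p q => by
    rw [hX, Matrix.smul_apply, smul_eq_mul]; exact mul_nonneg hε (hDinv p q)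
  have hXrow : ∀ p, ∑ q, X p q < 1 := by
    intro p
    simpa [hX, Finset.mul_sum] using hrow p
  obtain ⟨hu, hn⟩ := neumann_nonneg X hXn hXrow
  have hfac : D - ε • 1 = D * (1 - X) := by
    rw [mul_sub, mul_one, hX, Matrix.mul_smul, Matrix.mul_nonsing_inv _ hD]
  constructor
  · rw [hfac, Matrix.det_mul]; exact hD.mul hu
  · rw [hfac, Matrix.mul_inv_rev]
    intro p q
    rw [Matrix.mul_apply]
    exact Finset.sum_nonneg fun l _ => mul_nonneg (hn p l) (hDinv l q)

lemma shifted_inv_nonneg (C : Matrix n n ℝ) (hC : ∀ p q, 0 ≤ C p q) {r : ℝ}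
    (hr0 : 0 < r) (hr : ∀ p, ∑ q, C p q < r) :
    IsUnit (r • (1:Matrix n n ℝ) - C).det ∧ ∀ p q, 0 ≤ (r • (1:Matrix n n ℝ) - C)⁻¹ p q := by
  set X := r⁻¹ • C with hXdef
  have hXn : ∀ p q, 0 ≤ X p q := fun p q => by
    rw [hXdef, Matrix.smul_apply, smul_eq_mul]; exact mul_nonneg (by positivity) (hC p q)
  have hXrow : ∀ p, ∑ q, X p q < 1 := by
    intro p
    have h1 : r⁻¹ * ∑ q, C p q < r⁻¹ * r :=
      mul_lt_mul_of_pos_left (hr p) (by positivity)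
    rw [inv_mul_cancel₀ hr0.ne'] at h1
    simpa [hXdef, Finset.mul_sum] using h1
  obtain ⟨hu, hn⟩ := neumann_nonneg X hXn hXrow
  have hfac : r • (1:Matrix n n ℝ) - C = r • (1 - X) := by
    rw [smul_sub, hXdef, smul_smul, mul_inv_cancel₀ hr0.ne', one_smul]
  have hleft : (r⁻¹ • (1 - X)⁻¹) * (r • (1 - X)) = 1 := by
    rw [Matrix.smul_mul, Matrix.mul_smul, smul_smul, inv_mul_cancel₀ hr0.ne',
      one_smul, Matrix.nonsing_inv_mul _ hu]
  constructor
  · rw [hfac]; exact Matrix.isUnit_det_of_left_inverse hleft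
  · rw [hfac, Matrix.inv_eq_left_inv hleft]
    intro p q
    rw [Matrix.smul_apply, smul_eq_mul]
    exact mul_nonneg (by positivity) (hn p q)

end NeumannSection

section MMatrix
variable {n : Type*} [Fintype n] [DecidableEq n]

private lemma inv_mul_nonneg_iff {x y : ℝ} (hx : x ≠ 0) : 0 ≤ x⁻¹ * y ↔ 0 ≤ x * y := by
  constructor
  · intro h
    have : x * y = x ^ 2 * (x⁻¹ * y) := by field_simp
    rw [this]; positivity
  · intro h
    have : x⁻¹ * y = (x⁻¹) ^ 2 * (x * y) := by field_simp
    rw [this]; positivity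

lemma mmatrix_inv_nonneg (B : Matrix n n ℝ)
    (hoff : ∀ p q, p ≠ q → B p q ≤ 0)
    (hdet : ∀ t : ℝ, 0 ≤ t → IsUnit (B + t • 1).det) :
    ∀ p q, 0 ≤ B⁻¹ p q := by
  classical
  set s : ℝ := 1 + ∑ p, |B p p| with hs
  have hs1 : 1 ≤ s := by
    rw [hs]
    have : (0:ℝ) ≤ ∑ p, |B p p| := Finset.sum_nonneg fun p _ => abs_nonneg _
    linarith
  have hsd : ∀ p, B p p ≤ s := by
    intro p
    have h1 : |B p p| ≤ ∑ q, |B q q| :=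
      Finset.single_le_sum (f := fun q => |B q q|) (fun q _ => abs_nonneg _) (Finset.mem_univ p)
    have := le_abs_self (B p p)
    rw [hs]; linarith
  set C : Matrix n n ℝ := s • 1 - B with hC
  have hCn : ∀ p q, 0 ≤ C p q := by
    intro p q
    rw [hC, Matrix.sub_apply, Matrix.smul_apply, Matrix.one_apply, smul_eq_mul]
    by_cases hpq : p = q
    · subst hpq; simp; linarith [hsd p]
    · simp [hpq]
      have := hoff p q hpq; linarith
  set T : ℝ := ∑ p, ∑ q, C p q with hT
  have hT0 : 0 ≤ T := Finset.sum_nonneg fun p _ => Finset.sum_nonneg fun q _ => hCn p q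
  have hrowT : ∀ p, ∑ q, C p q < s + T := by
    intro p
    have h1 : ∑ q, C p q ≤ T :=
      Finset.single_le_sum (f := fun p => ∑ q, C p q)
        (fun p _ => Finset.sum_nonneg fun q _ => hCn p q) (Finset.mem_univ p)
    linarith
  have hBt : ∀ t : ℝ, B + t • 1 = (s + t) • (1:Matrix n n ℝ) - C := by
    intro t
    rw [hC, add_smul]
    abel
  -- the key sign-characterization
  have key : ∀ t : ℝ, 0 ≤ t → ∀ p q,
      (0 ≤ (B + t • 1)⁻¹ p q ↔ 0 ≤ (B + t • 1).det * (B + t • 1).adjugate p q) := by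
    intro t ht p q
    have hu := hdet t ht
    have hne : (B + t • 1).det ≠ 0 := by
      intro h0; rw [h0] at hu; exact (by simp : ¬ IsUnit (0:ℝ)) hu
    rw [Matrix.inv_def, Ring.inverse_eq_inv', Matrix.smul_apply, smul_eq_mul]
    exact inv_mul_nonneg_iff hne
  -- the good set
  set G : Set ℝ := {t | t ∈ Set.Icc (0:ℝ) T ∧
    ∀ p q, 0 ≤ (B + t • 1).det * (B + t • 1).adjugate p q} with hG
  have hGclosed : IsClosed G := by
    have hc : Continuous (fun t : ℝ => B + t • (1 : Matrix n n ℝ)) := by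
      apply continuous_matrix
      intro a b
      simp only [Matrix.add_apply, Matrix.smul_apply, smul_eq_mul]
      exact continuous_const.add (continuous_id.mul continuous_const)
    have hGeq : G = Set.Icc (0:ℝ) T ∩ ⋂ p, ⋂ q,
        {t : ℝ | 0 ≤ (B + t • 1).det * (B + t • 1).adjugate p q} := by
      ext t
      simp [hG, Set.mem_iInter, Set.mem_setOf_eq, Set.mem_inter_iff]
    rw [hGeq]
    refine isClosed_Icc.inter (isClosed_iInter fun p => isClosed_iInter fun q => ?_)
    exact isClosed_le continuous_const
      ((hc.matrix_det).mul ((hc.matrix_adjugate).matrix_elem p q))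
  have hTanchor : T ∈ G := by
    obtain ⟨hu, hnn⟩ := shifted_inv_nonneg C hCn (by linarith : (0:ℝ) < s + T) hrowT
    refine ⟨⟨hT0, le_refl T⟩, fun p q => ?_⟩
    rw [← key T hT0 p q, hBt T]
    exact hnn p q
  have hGne : G.Nonempty := ⟨T, hTanchor⟩
  have hGbdd : BddBelow G := ⟨0, fun x hx => hx.1.1⟩
  set t₀ : ℝ := sInf G with ht₀
  have ht₀G : t₀ ∈ G := hGclosed.csInf_mem hGne hGbdd
  have ht₀0 : 0 ≤ t₀ := ht₀G.1.1
  -- show t₀ = 0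
  have ht₀eq : t₀ = 0 := by
    by_contra hne0
    have ht₀pos : 0 < t₀ := lt_of_le_of_ne ht₀0 (Ne.symm hne0)
    set D : Matrix n n ℝ := B + t₀ • 1 with hD
    have hDu : IsUnit D.det := hdet t₀ ht₀0
    have hDinv : ∀ p q, 0 ≤ D⁻¹ p q := fun p q => (key t₀ ht₀0 p q).2 (ht₀G.2 p q)
    set R : ℝ := ∑ p, ∑ q, D⁻¹ p q with hR
    have hR0 : 0 ≤ R := Finset.sum_nonneg fun p _ => Finset.sum_nonneg fun q _ => hDinv p q
    set ε : ℝ := min t₀ (1 / (1 + R)) with hε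
    have hεpos : 0 < ε := lt_min ht₀pos (by positivity)
    have hεle : ε ≤ t₀ := min_le_left _ _
    have hεrow : ∀ p, ε * ∑ q, D⁻¹ p q < 1 := by
      intro p
      have h1 : ∑ q, D⁻¹ p q ≤ R :=
        Finset.single_le_sum (f := fun p => ∑ q, D⁻¹ p q)
          (fun p _ => Finset.sum_nonneg fun q _ => hDinv p q) (Finset.mem_univ p)
      have h2 : ε ≤ 1 / (1 + R) := min_le_right _ _
      have h3 : ε * ∑ q, D⁻¹ p q ≤ (1 / (1 + R)) * R := by
        apply mul_le_mul h2 h1 (Finset.sum_nonneg fun q _ => hDinv p q) (by positivity)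
      have h4 : (1 / (1 + R)) * R < 1 := by
        rw [div_mul_eq_mul_div, div_lt_one (by positivity)]
        linarith
      linarith
    obtain ⟨hu2, hnn2⟩ := step_left D hDu hDinv hεpos.le hεrow
    have hmem : t₀ - ε ∈ G := by
      have hsub : D - ε • (1:Matrix n n ℝ) = B + (t₀ - ε) • 1 := by
        rw [hD, sub_smul]; abel
      refine ⟨⟨by linarith, by linarith [ht₀G.1.2]⟩, fun p q => ?_⟩
      rw [← key (t₀ - ε) (by linarith) p q, ← hsub]
      exact hnn2 p q
    have := csInf_le hGbdd hmem
    rw [← ht₀] at this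
    linarith
  have h0G : (0:ℝ) ∈ G := ht₀eq ▸ ht₀G
  intro p q
  have := (key 0 le_rfl p q).2 (h0G.2 p q)
  simpa using this

lemma det_shift_isUnit {n : Type*} [Fintype n] [DecidableEq n]
    (X : Matrix n n ℝ) (h : IsHurwitz (-X)) {t : ℝ} (ht : 0 ≤ t) :
    IsUnit (X + t • 1).det := by
  rw [isUnit_iff_ne_zero]
  intro hdet
  have hmem : (t : ℂ) ∈ spectrum ℂ ((-X).map Complex.ofReal) := by
    rw [spectrum.mem_iff]
    have he : algebraMap ℂ (Matrix n n ℂ) (t : ℂ) - (-X).map Complex.ofReal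
        = (X + t • 1).map Complex.ofReal := by
      ext p q
      simp [Matrix.algebraMap_matrix_apply, Matrix.map_apply, Matrix.one_apply]
      by_cases hpq : p = q <;> simp [hpq] <;> ring
    rw [he]
    rw [Matrix.isUnit_iff_isUnit_det]
    have hd : ((X + t • 1).map Complex.ofReal).det = Complex.ofRealHom (X + t • 1).det :=
      (RingHom.map_det Complex.ofRealHom _).symm
    rw [hd, hdet]
    simp
  have := h _ hmem
  simp at this
  linarith

end MMatrix

/-- Suppose `-(A-M)` is Hurwitz, `u = (A-M)⁻¹ 𝟙`, and `k` attains the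
maximum of `u`. Let `i ≠ j` with `Mᵢⱼ = 0`, `m > 0`, suppose `-(A - M - m eᵢ eⱼᵀ)` is
Hurwitz and `((A-M)⁻¹)ₖᵢ > 0`. Then `ū = (A - M - m eᵢ eⱼᵀ)⁻¹ 𝟙` satisfies
`ūₖ > maxᵢ uᵢ`; in particular `max ū > max u`, so adding the edge is not scalable. -/
theorem stmt_15 {N : ℕ} (hN : 0 < N) (A M : Matrix (Fin N) (Fin N) ℝ)
    (hAdiag : ∀ p q, p ≠ q → A p q = 0) (hApos : ∀ p, 0 < A p p)
    (hMnonneg : ∀ p q, 0 ≤ M p q) (hMdiag : ∀ p, M p p = 0)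
    (hHur : IsHurwitz (-(A - M)))
    (k : Fin N)
    (hk : ∀ p, ((A - M)⁻¹ *ᵥ (fun _ : Fin N => (1 : ℝ))) p ≤
      ((A - M)⁻¹ *ᵥ (fun _ : Fin N => (1 : ℝ))) k)
    (i j : Fin N) (hij : i ≠ j) (hMij : M i j = 0) (m : ℝ) (hm : 0 < m)
    (hHur2 : IsHurwitz (-(A - M - Matrix.single i j m)))
    (hki : 0 < (A - M)⁻¹ k i) :
    haveI : Nonempty (Fin N) := Fin.pos_iff_nonempty.mp hN
    let u : Fin N → ℝ := (A - M)⁻¹ *ᵥ (fun _ => (1 : ℝ))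
    let ubar : Fin N → ℝ := (A - M - Matrix.single i j m)⁻¹ *ᵥ (fun _ => (1 : ℝ))
    Finset.univ.sup' Finset.univ_nonempty u < ubar k ∧
    Finset.univ.sup' Finset.univ_nonempty u <
      Finset.univ.sup' Finset.univ_nonempty ubar := by
  haveI : Nonempty (Fin N) := Fin.pos_iff_nonempty.mp hN
  set E : Matrix (Fin N) (Fin N) ℝ := Matrix.single i j m with hE
  set B : Matrix (Fin N) (Fin N) ℝ := A - M with hB
  set Bb : Matrix (Fin N) (Fin N) ℝ := A - M - E with hBb
  set u : Fin N → ℝ := B⁻¹ *ᵥ (fun _ => (1 : ℝ)) with hu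
  set ubar : Fin N → ℝ := Bb⁻¹ *ᵥ (fun _ => (1 : ℝ)) with hubar
  have hEapp : ∀ p q, E p q = if i = p ∧ j = q then m else 0 := fun p q => rfl
  have hEnn : ∀ p q, 0 ≤ E p q := by
    intro p q; rw [hEapp]; split <;> [exact hm.le; exact le_rfl]
  have hBdet : IsUnit B.det := by
    have := det_shift_isUnit B hHur (le_refl 0)
    simpa using this
  have hBbdet : IsUnit Bb.det := by
    have := det_shift_isUnit Bb hHur2 (le_refl 0)
    simpa using this
  have hoff : ∀ p q, p ≠ q → Bb p q ≤ 0 := by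
    intro p q hpq
    have h1 : Bb p q = A p q - M p q - E p q := rfl
    rw [h1, hAdiag p q hpq]
    have := hMnonneg p q
    have := hEnn p q
    linarith
  have hBbinv : ∀ p q, 0 ≤ Bb⁻¹ p q :=
    mmatrix_inv_nonneg Bb hoff (fun t ht => det_shift_isUnit Bb hHur2 ht)
  have hub_nonneg : ∀ p, 0 ≤ ubar p := by
    intro p
    show 0 ≤ (Bb⁻¹ *ᵥ fun _ => (1:ℝ)) p
    simp only [Matrix.mulVec, dotProduct]
    exact Finset.sum_nonneg fun q _ => by
      simpa using mul_nonneg (hBbinv p q) zero_le_one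
  have hBbu : Bb *ᵥ ubar = fun _ => (1:ℝ) := by
    rw [hubar, Matrix.mulVec_mulVec, Matrix.mul_nonsing_inv _ hBbdet, Matrix.one_mulVec]
  -- ubar j > 0
  have hBbjj : Bb j j = A j j := by
    have h1 : Bb j j = A j j - M j j - E j j := rfl
    rw [h1, hMdiag j, hEapp]
    simp [hij]
  have hubarj : 0 < ubar j := by
    have hj : ∑ q, Bb j q * ubar q = 1 := by
      have := congrFun hBbu j
      simpa [Matrix.mulVec, dotProduct] using this
    have hle : ∑ q, Bb j q * ubar q ≤ Bb j j * ubar j := by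
      rw [← Finset.add_sum_erase _ _ (Finset.mem_univ j)]
      have : ∑ q ∈ Finset.univ.erase j, Bb j q * ubar q ≤ 0 :=
        Finset.sum_nonpos fun q hq =>
          mul_nonpos_of_nonpos_of_nonneg
            (hoff j q (Ne.symm (Finset.ne_of_mem_erase hq))) (hub_nonneg q)
      linarith
    rw [hj, hBbjj] at hle
    by_contra hcon
    push_neg at hcon
    nlinarith [hApos j]
  -- B *ᵥ ubar
  have hBE : B = Bb + E := by rw [hBb, hB]; abel
  have hBu2 : B *ᵥ ubar = fun p => 1 + (if p = i then m * ubar j else 0) := by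
    funext p
    rw [hBE, Matrix.add_mulVec, hBbu]
    have hEv : (E *ᵥ ubar) p = if p = i then m * ubar j else 0 := by
      simp only [Matrix.mulVec, dotProduct, hEapp]
      by_cases hp : p = i
      · subst hp
        have e : ∀ q, (if p = p ∧ j = q then m else 0) * ubar q
            = if q = j then m * ubar j else 0 := by
          intro q
          by_cases hq : q = j
          · subst hq; simp
          · have h2 : ¬(p = p ∧ j = q) := fun h => hq h.2.symm
            rw [if_neg h2, zero_mul, if_neg hq]
        rw [Finset.sum_congr rfl fun q _ => e q]
        simp
      · have e : ∀ q, (if i = p ∧ j = q then m else 0) * ubar q = 0 := by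
          intro q
          have h2 : ¬(i = p ∧ j = q) := fun h => hp h.1.symm
          rw [if_neg h2, zero_mul]
        rw [Finset.sum_congr rfl fun q _ => e q]
        simp [hp]
    simp [hEv]
  have hkey : ubar k = u k + B⁻¹ k i * (m * ubar j) := by
    have h0 : ubar = B⁻¹ *ᵥ (B *ᵥ ubar) := by
      rw [Matrix.mulVec_mulVec, Matrix.nonsing_inv_mul _ hBdet, Matrix.one_mulVec]
    have h1 : ubar k = ∑ q, B⁻¹ k q * (1 + if q = i then m * ubar j else 0) := by
      conv_lhs => rw [h0, hBu2]
      simp [Matrix.mulVec, dotProduct]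
    rw [h1]
    have h2 : ∀ q : Fin N, B⁻¹ k q * (1 + if q = i then m * ubar j else 0)
        = B⁻¹ k q * 1 + (if q = i then B⁻¹ k i * (m * ubar j) else 0) := by
      intro q
      by_cases hq : q = i
      · subst hq; simp; ring
      · simp [hq]
    rw [Finset.sum_congr rfl (fun q _ => h2 q), Finset.sum_add_distrib,
      Finset.sum_ite_eq' Finset.univ i (fun _ => B⁻¹ k i * (m * ubar j))]
    simp [hu, Matrix.mulVec, dotProduct]
  have hlt : u k < ubar k := by
    rw [hkey]
    have : 0 < B⁻¹ k i * (m * ubar j) := mul_pos hki (mul_pos hm hubarj)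
    linarith
  have hsup : Finset.univ.sup' Finset.univ_nonempty u ≤ u k :=
    Finset.sup'_le _ _ fun p _ => hk p
  exact ⟨lt_of_le_of_lt hsup hlt,
    lt_of_le_of_lt hsup (lt_of_lt_of_le hlt (Finset.le_sup' ubar (Finset.mem_univ k)))⟩
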